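/- For every x ∈ ℝ and every h > 0, |∫_ℝ K(z) f(x − h z) dz − f(x)| ≤ (M/2) · h² · ∫_ℝ z² K(z) dz. (The quantity ∫_ℝ K(z) f(x − h z) dz is the expectation of the naive kernel density estimator f̂(x) = (1/(nh)) Σᵢ K((x − Xᵢ)/h) when the Xᵢ have density f; hence the interior bias of f̂ is O(h²).) -/

import Mathlib

open MeasureTheory Filter Topology

section AuxKDE
open intervalIntegral

theorem integral_abs_sub (a b : ℝ) :
    abs (∫ t in a..b, |t - a|) = (b - a) ^ 2 / 2 := by
  have hid : ∀ c d : ℝ, (∫ t in c..d, (t - c)) = (d - c) ^ 2 / 2 := by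
    intro c d
    have := intervalIntegral.integral_comp_sub_right (a := c) (b := d) (fun t => t) c
    rw [this, integral_id]
    ring
  rcases le_total a b with hab | hab
  · have : (∫ t in a..b, |t - a|) = ∫ t in a..b, (t - a) := by
      apply intervalIntegral.integral_congr
      intro t ht
      rw [Set.uIcc_of_le hab] at ht
      exact abs_of_nonneg (by linarith [ht.1])
    rw [this, hid]
    rw [abs_of_nonneg (by positivity)]
  · have h1 : (∫ t in a..b, |t - a|) = - ∫ t in b..a, |t - a| :=
      intervalIntegral.integral_symm b a
    have h2 : (∫ t in b..a, |t - a|) = ∫ t in b..a, (a - t) := by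
      apply intervalIntegral.integral_congr
      intro t ht
      rw [Set.uIcc_of_le hab] at ht
      show |t - a| = a - t
      rw [abs_of_nonpos (by linarith [ht.2])]
      ring
    have h3 : (∫ t in b..a, (a - t)) = (a - b) ^ 2 / 2 := by
      have : (∫ t in b..a, (a - t)) = ∫ t in a..b, (t - a) := by
        rw [intervalIntegral.integral_symm a b, ← intervalIntegral.integral_neg]
        apply intervalIntegral.integral_congr
        intro t _
        show -(a - t) = t - a
        ring
      rw [this, hid]
      ring
    rw [h1, h2, h3, abs_neg, abs_of_nonneg (by positivity)]
    ring

theorem taylor2_aux (f : ℝ → ℝ) (M : ℝ) (hfdiff : Differentiable ℝ f)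
    (hfdiff2 : Differentiable ℝ (deriv f)) (hM : 0 ≤ M)
    (hbound : ∀ y, |deriv (deriv f) y| ≤ M) (a b : ℝ) :
    |f b - f a - deriv f a * (b - a)| ≤ M / 2 * (b - a) ^ 2 := by
  have hcont : Continuous (deriv f) := hfdiff2.continuous
  have hftc : f b - f a = ∫ t in a..b, deriv f t :=
    (intervalIntegral.integral_deriv_eq_sub (fun t _ => hfdiff t)
      (hcont.intervalIntegrable a b)).symm
  have hlin : ∀ t : ℝ, |deriv f t - deriv f a| ≤ M * |t - a| := by
    intro t
    have := Convex.norm_image_sub_le_of_norm_deriv_le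
      (f := deriv f) (s := Set.univ)
      (fun y _ => hfdiff2 y) (fun y _ => hbound y) convex_univ
      (Set.mem_univ a) (Set.mem_univ t)
    simpa [Real.norm_eq_abs] using this
  have hconst : deriv f a * (b - a) = ∫ t in a..b, deriv f a := by
    simp [mul_comm]
  have hkey : f b - f a - deriv f a * (b - a)
      = ∫ t in a..b, (deriv f t - deriv f a) := by
    rw [hftc, hconst, ← intervalIntegral.integral_sub
      (hcont.intervalIntegrable a b) (intervalIntegrable_const)]
  rw [hkey]
  have hIabs : IntervalIntegrable (fun t => M * |t - a|) volume a b :=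
    ((continuous_const.mul (continuous_abs.comp
      (continuous_id.sub continuous_const)))).intervalIntegrable a b
  have hb1 := intervalIntegral.norm_integral_le_abs_of_norm_le
      (g := fun t => M * |t - a|) (f := fun t => deriv f t - deriv f a)
      (μ := volume) (a := a) (b := b)
      (Filter.Eventually.of_forall fun t => by simpa [Real.norm_eq_abs] using hlin t)
      hIabs
  rw [Real.norm_eq_abs] at hb1
  refine hb1.trans ?_
  rw [intervalIntegral.integral_const_mul, abs_mul, abs_of_nonneg hM,
    integral_abs_sub]
  linarith [sq_nonneg (b-a)]

end AuxKDE

/-- Interior bias of the naive kernel density estimator is `O(h²)`: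
for a kernel `K` (nonnegative, integrable, integrating to one, symmetric,
with finite second moment) and a twice differentiable density `f` with
second derivative bounded by `M`, the expectation
`∫ K(z) f(x − h z) dz` of the naive estimator differs from `f x` by at most
`(M/2) h² ∫ z² K(z) dz`. -/
theorem naive_density_interior_bias
    (K f : ℝ → ℝ) (M : ℝ)
    (hK0 : ∀ z, 0 ≤ K z) (hKint : Integrable K)
    (hK1 : (∫ z, K z) = 1) (hKsymm : ∀ z, K (-z) = K z)
    (hKmom2 : Integrable (fun z => z ^ 2 * K z))
    (hfdiff : Differentiable ℝ f)
    (hfdiff2 : Differentiable ℝ (deriv f))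
    (hM : 0 ≤ M)
    (hbound : ∀ y, |deriv (deriv f) y| ≤ M) :
    ∀ (x h : ℝ), 0 < h →
      |(∫ z, K z * f (x - h * z)) - f x| ≤ M / 2 * h ^ 2 * ∫ z, z ^ 2 * K z := by
  intro x h hh
  have hfc : Continuous f := hfdiff.continuous
  set R : ℝ → ℝ := fun z => f (x - h * z) - f x + h * z * deriv f x with hRdef
  have hRcont : Continuous R := by
    apply Continuous.add
    · exact (hfc.comp (by continuity)).sub continuous_const
    · continuity
  have hR : ∀ z, |R z| ≤ M / 2 * h ^ 2 * z ^ 2 := by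
    intro z
    have := taylor2_aux f M hfdiff hfdiff2 hM hbound x (x - h * z)
    have e1 : f (x - h * z) - f x - deriv f x * (x - h * z - x) = R z := by
      simp only [hRdef]; ring
    have e2 : M / 2 * (x - h * z - x) ^ 2 = M / 2 * h ^ 2 * z ^ 2 := by ring
    rw [e1, e2] at this
    exact this
  -- integrability of z * K z
  have IzK : Integrable (fun z => z * K z) := by
    refine Integrable.mono' (hKint.add hKmom2) ?_ ?_
    · exact (aestronglyMeasurable_id.mul hKint.1)
    · refine Eventually.of_forall fun z => ?_
      have : |z * K z| = |z| * K z := by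
        rw [abs_mul, abs_of_nonneg (hK0 z)]
      rw [Real.norm_eq_abs, this]
      have hz : |z| ≤ 1 + z ^ 2 := by nlinarith [abs_nonneg z, sq_abs z, sq_nonneg (|z| - 1)]
      calc |z| * K z ≤ (1 + z ^ 2) * K z := by
            exact mul_le_mul_of_nonneg_right hz (hK0 z)
        _ = K z + z ^ 2 * K z := by ring
  -- odd integral is zero
  have hodd : (∫ z, z * K z) = 0 := by
    have hneg : (∫ z, (-z) * K (-z)) = ∫ z, z * K z :=
      integral_neg_eq_self (fun z => z * K z) volume
    have : (∫ z, (-z) * K (-z)) = - ∫ z, z * K z := by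
      rw [← MeasureTheory.integral_neg]
      congr 1; ext z; rw [hKsymm]; ring
    linarith [hneg, this]
  -- integrability of K z * R z
  have Ibnd : Integrable (fun z => M / 2 * h ^ 2 * (z ^ 2 * K z)) :=
    hKmom2.const_mul (M / 2 * h ^ 2)
  have IR : Integrable (fun z => K z * R z) := by
    refine Integrable.mono' Ibnd (hKint.1.mul hRcont.aestronglyMeasurable) ?_
    refine Eventually.of_forall fun z => ?_
    rw [Real.norm_eq_abs, abs_mul, abs_of_nonneg (hK0 z)]
    calc K z * |R z| ≤ K z * (M / 2 * h ^ 2 * z ^ 2) :=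
          mul_le_mul_of_nonneg_left (hR z) (hK0 z)
      _ = M / 2 * h ^ 2 * (z ^ 2 * K z) := by ring
  -- the decomposition
  have hdecomp : ∀ z, K z * f (x - h * z)
      = (K z * f x - (h * deriv f x) * (z * K z)) + K z * R z := by
    intro z; simp only [hRdef]; ring
  have I1a : Integrable (fun z => K z * f x) := hKint.mul_const (f x)
  have I1b : Integrable (fun z => h * deriv f x * (z * K z)) :=
    IzK.const_mul (h * deriv f x)
  have I1 : Integrable (fun z => K z * f x - h * deriv f x * (z * K z)) :=
    I1a.sub I1b
  have hIvalue : (∫ z, K z * f (x - h * z)) = f x + ∫ z, K z * R z := by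
    rw [integral_congr_ae (Eventually.of_forall hdecomp)]
    rw [integral_add I1 IR, integral_sub I1a I1b]
    rw [MeasureTheory.integral_mul_const, MeasureTheory.integral_const_mul, hodd, hK1]
    ring
  rw [hIvalue]
  have hfin : |f x + (∫ z, K z * R z) - f x| = |∫ z, K z * R z| := by
    congr 1; ring
  rw [hfin]
  have hptw : ∀ z : ℝ, ‖K z * R z‖ ≤ M / 2 * h ^ 2 * (z ^ 2 * K z) := by
    intro z
    rw [Real.norm_eq_abs, abs_mul, abs_of_nonneg (hK0 z)]
    calc K z * |R z| ≤ K z * (M / 2 * h ^ 2 * z ^ 2) :=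
          mul_le_mul_of_nonneg_left (hR z) (hK0 z)
      _ = M / 2 * h ^ 2 * (z ^ 2 * K z) := by ring
  have hb := norm_integral_le_of_norm_le (hKmom2.const_mul (M / 2 * h ^ 2))
    (Eventually.of_forall hptw)
  rw [Real.norm_eq_abs] at hb
  refine hb.trans ?_
  rw [MeasureTheory.integral_const_mul]
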